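/- The Zeeman topology Z induces the 3-dimensional Euclidean topology on every space axis: for every affine hyperplane H ⊆ M = ℝ⁴ all of whose nonzero direction vectors w satisfy Q(w) < 0 (a spacelike hyperplane), the subspace topology induced by Z on H coincides with the subspace topology induced on H by the standard Euclidean topology E of ℝ⁴. -/

import Mathlib

open Set Metric TopologicalSpace Topology

noncomputable section

/-- Minkowski space `M = ℝ⁴` with the Euclidean metric/topology. -/
abbrev M4 : Type := EuclideanSpace ℝ (Fin 4)

/-- The Minkowski quadratic form `Q(x) = x₀² − x₁² − x₂² − x₃²`. -/
def Q (x : M4) : ℝ := x 0 ^ 2 - x 1 ^ 2 - x 2 ^ 2 - x 3 ^ 2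

/-- Chronological order: `x ≪ y`. -/
def chron (x y : M4) : Prop := Q (y - x) > 0 ∧ x 0 < y 0

/-- Causal order: `x ≺ y`. -/
def causal (x y : M4) : Prop := Q (y - x) ≥ 0 ∧ x 0 ≤ y 0

/-- Horismos: `x → y`. -/
def horismos (x y : M4) : Prop := Q (y - x) = 0 ∧ x ≠ y ∧ x 0 < y 0

/-- The light cone `N(x) = N⁺(x) ∪ N⁻(x)`. -/
def lightCone (x : M4) : Set M4 := {y | horismos x y} ∪ {y | horismos y x}

/-- The Zeeman topology `Z`, generated by the sets `Z_ε(x) = (B_ε(x) \ N(x)) ∪ {x}`. -/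
def Zeeman : TopologicalSpace M4 :=
  TopologicalSpace.generateFrom
    {S | ∃ (x : M4) (ε : ℝ), 0 < ε ∧ S = (Metric.ball x ε \ lightCone x) ∪ {x}}

/-- The interval topology `T_R` of a relation `R`, generated by the subbasis of
complements of the sets `R⁺(x) = {y | R x y}` and `R⁻(x) = {y | R y x}`. -/
def intervalTopology (R : M4 → M4 → Prop) : TopologicalSpace M4 :=
  TopologicalSpace.generateFrom
    ({S | ∃ x : M4, S = {y | R x y}ᶜ} ∪ {S | ∃ x : M4, S = {y | R y x}ᶜ})
lemma Q_cont : Continuous Q := by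
  unfold Q; fun_prop

lemma Q_neg (w : M4) : Q (-w) = Q w := by simp [Q]

lemma Q_zero_of (w : M4) (h : Q w = 0) (h0 : w 0 = 0) : w = 0 := by
  have h1 : w 1 ^ 2 + w 2 ^ 2 + w 3 ^ 2 = 0 := by simp [Q, h0] at h; linarith
  have h2 : w 1 = 0 ∧ w 2 = 0 ∧ w 3 = 0 := by
    refine ⟨?_, ?_, ?_⟩ <;>
      nlinarith [sq_nonneg (w 1), sq_nonneg (w 2), sq_nonneg (w 3)]
  ext i
  fin_cases i <;> simp [h0, h2.1, h2.2.1, h2.2.2]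

lemma mem_lightCone_iff (x y : M4) : y ∈ lightCone x ↔ Q (y - x) = 0 ∧ y ≠ x := by
  constructor
  · rintro (⟨hQ, hne, -⟩ | ⟨hQ, hne, -⟩)
    · exact ⟨hQ, Ne.symm hne⟩
    · refine ⟨?_, hne⟩
      have := Q_neg (x - y); rw [neg_sub] at this; exact this.trans hQ
  · rintro ⟨hQ, hne⟩
    have h0 : (y - x) 0 ≠ 0 := by
      intro h0
      exact hne (sub_eq_zero.mp (Q_zero_of _ hQ h0))
    have hsub : (y - x) 0 = y 0 - x 0 := rfl
    rcases lt_or_gt_of_ne h0 with h | h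
    · right
      refine ⟨?_, hne, by rw [hsub] at h; linarith⟩
      have := Q_neg (x - y); rw [neg_sub] at this; exact this.symm.trans hQ
    · left
      exact ⟨hQ, Ne.symm hne, by rw [hsub] at h; linarith⟩

lemma zeeman_le_euclid : Zeeman ≤ (inferInstance : TopologicalSpace M4) := by
  rw [TopologicalSpace.le_def]
  intro U hU
  have h := Metric.isOpen_iff.mp hU
  choose ε hε hsub using h
  have hUeq : U = ⋃₀ (range (fun x : U => (ball x.1 (ε x.1 x.2) \ lightCone x.1) ∪ {x.1})) := by
    ext y
    rw [sUnion_range, mem_iUnion]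
    constructor
    · intro hy; exact ⟨⟨y, hy⟩, Or.inr rfl⟩
    · rintro ⟨x, ⟨hb, -⟩ | hx⟩
      · exact hsub x.1 x.2 hb
      · rw [mem_singleton_iff] at hx; rw [hx]; exact x.2
  rw [hUeq]
  exact TopologicalSpace.GenerateOpen.sUnion _ (by
    rintro S ⟨x, rfl⟩
    exact .basic _ ⟨x.1, ε x.1 x.2, hε x.1 x.2, rfl⟩)


/-- The Zeeman topology induces the 3-dimensional Euclidean topology on every
spacelike affine hyperplane `H`. -/
theorem Zeeman_induces_euclidean_on_spacelike_hyperplane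
    (H : AffineSubspace ℝ M4)
    (hdim : Module.finrank ℝ H.direction = 3)
    (hspace : ∀ w ∈ H.direction, w ≠ 0 → Q w < 0) :
    TopologicalSpace.induced (fun p : H => (p : M4)) Zeeman =
      TopologicalSpace.induced (fun p : H => (p : M4))
        (inferInstance : TopologicalSpace M4) := by
  set f : H → M4 := fun p => (p : M4) with hf
  refine le_antisymm (induced_mono zeeman_le_euclid) ?_
  rw [Zeeman]
  refine @le_induced_generateFrom H M4
    (TopologicalSpace.induced f (inferInstance : TopologicalSpace M4)) _ f ?_
  rintro S ⟨x, ε, hε, rfl⟩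
  by_cases hx : x ∈ H
  · -- lightCone x misses H; Z_ε(x) ∩ H = ball ∩ H
    have heq : f ⁻¹' ((ball x ε \ lightCone x) ∪ {x}) = f ⁻¹' (ball x ε) := by
      ext ⟨y, hy⟩
      simp only [mem_preimage, hf]
      constructor
      · rintro (⟨hb, -⟩ | hyx)
        · exact hb
        · rw [mem_singleton_iff] at hyx
          simp only [hyx]; exact mem_ball_self hε
      · intro hb
        by_cases hyx : y = x
        · exact Or.inr (by simp [hyx])
        · refine Or.inl ⟨hb, ?_⟩
          intro hN
          rw [mem_lightCone_iff] at hN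
          have hdir : y - x ∈ H.direction := by
            have := AffineSubspace.vsub_mem_direction hy hx
            simpa using this
          have : Q (y - x) < 0 := hspace _ hdir (sub_ne_zero.mpr hyx)
          rw [hN.1] at this; exact lt_irrefl 0 this
    rw [heq]
    exact isOpen_induced (isOpen_ball)
  · -- x ∉ H : Z_ε(x) ∩ H = (ball ∩ {Q(·-x) ≠ 0}) ∩ H
    have heq : f ⁻¹' ((ball x ε \ lightCone x) ∪ {x})
        = f ⁻¹' (ball x ε ∩ {y | Q (y - x) = 0}ᶜ) := by
      ext ⟨y, hy⟩
      simp only [mem_preimage, hf, mem_inter_iff, mem_compl_iff, mem_setOf_eq]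
      have hyx : y ≠ x := fun h => hx (h ▸ hy)
      constructor
      · rintro (⟨hb, hN⟩ | h)
        · refine ⟨hb, fun hQ => hN ?_⟩
          exact (mem_lightCone_iff x y).mpr ⟨hQ, hyx⟩
        · exact absurd (mem_singleton_iff.mp h) hyx
      · rintro ⟨hb, hQ⟩
        refine Or.inl ⟨hb, fun hN => hQ ?_⟩
        exact ((mem_lightCone_iff x y).mp hN).1
    rw [heq]
    refine isOpen_induced (IsOpen.inter isOpen_ball ?_)
    have : IsClosed {y : M4 | Q (y - x) = 0} :=
      IsClosed.preimage (Q_cont.comp (continuous_id.sub continuous_const))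
        isClosed_singleton
    exact this.isOpen_compl
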